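/- For every integer k and odd L there exists a directed layered graph which is a local optimum of path local search with parameter L (no directed path of length at most L from u to v with disc(v) > disc(u) + 2), has maximum discrepancy exactly k, and has O(k³L²) vertices. -/
import Mathlib


open Finset

def inDeg {V : Type*} [DecidableEq V] (D : Finset (V × V)) (v : V) : ℕ :=
  (D.filter (fun e => e.2 = v)).card

def outDeg {V : Type*} [DecidableEq V] (D : Finset (V × V)) (v : V) : ℕ :=
  (D.filter (fun e => e.1 = v)).card

def disc {V : Type*} [DecidableEq V] (D : Finset (V × V)) (v : V) : ℤ :=
  (inDeg D v : ℤ) - (outDeg D v : ℤ)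

/-- Local optimality for path local search with parameter `L`: no directed path of
length between `1` and `L` from `u₀` to `u_l` has `disc(u_l) > disc(u₀) + 2`. -/
def pathLocalOpt {V : Type*} [DecidableEq V] (D : Finset (V × V)) (L : ℕ) : Prop :=
  ∀ l : ℕ, 1 ≤ l → l ≤ L → ∀ p : ℕ → V,
    (∀ j < l, (p j, p (j + 1)) ∈ D) → disc D (p l) ≤ disc D (p 0) + 2

set_option linter.unusedSectionVars false


namespace PLS

def A (k L i : ℕ) : ℤ :=
  (k : ℤ) + (L : ℤ) * (i / L : ℕ) * ((k : ℤ) - 1 - (i / L : ℕ))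
    + ((i % L : ℕ) : ℤ) * ((k : ℤ) - 2 - 2 * (i / L : ℕ))

lemma A_zero (k L : ℕ) : A k L 0 = k := by simp [A]

lemma A_M (k L : ℕ) (hk : 1 ≤ k) (hL : 1 ≤ L) : A k L ((k-1)*L) = k := by
  have h0 : 0 < L := hL
  have h1 : ((k-1)*L) / L = k - 1 := Nat.mul_div_cancel _ h0
  have h2 : ((k-1)*L) % L = 0 := Nat.mul_mod_left _ _
  have hc : ((k - 1 : ℕ) : ℤ) = (k : ℤ) - 1 := by
    push_cast [Nat.cast_sub hk]; ring
  simp [A, h1, h2, hc]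

lemma A_ge (k L i : ℕ) (hk : 1 ≤ k) (hL : 1 ≤ L) (hi : i ≤ (k-1)*L) :
    (k : ℤ) ≤ A k L i := by
  have h0 : 0 < L := hL
  have hdm : L * (i / L) + i % L = i := Nat.div_add_mod i L
  have hrL : i % L < L := Nat.mod_lt _ h0
  have htk : i / L ≤ k - 1 := by
    have h := Nat.div_le_div_right (c := L) hi
    rwa [Nat.mul_div_cancel _ h0] at h
  have hcase : i % L = 0 ∨ (2 ≤ k ∧ i / L ≤ k - 2) := by
    rcases Nat.lt_or_ge k 2 with hk2 | hk2
    · left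
      have hk1 : k = 1 := by omega
      have : i = 0 := by
        have : (k-1)*L = 0 := by rw [hk1]; simp
        omega
      simp [this]
    · rcases Nat.lt_or_ge (i / L) (k-1) with h | h
      · right; exact ⟨hk2, by omega⟩
      · left
        have hteq : i / L = k - 1 := le_antisymm htk h
        have hcm : (k-1) * L = L * (k-1) := Nat.mul_comm _ _
        rw [hteq] at hdm
        omega
  have hT : (0:ℤ) ≤ ((i/L : ℕ):ℤ) := by positivity
  have hR : (0:ℤ) ≤ ((i%L : ℕ):ℤ) := by positivity
  have hTK : ((i/L : ℕ):ℤ) ≤ (k:ℤ) - 1 := by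
    have h2 : ((i/L : ℕ):ℤ) ≤ ((k-1 : ℕ) : ℤ) := by exact_mod_cast htk
    omega
  have hRL : ((i%L : ℕ):ℤ) ≤ (L:ℤ) - 1 := by
    have h2 : ((i%L : ℕ):ℤ) < (L:ℤ) := by exact_mod_cast hrL
    omega
  have key : (0:ℤ) ≤ (L:ℤ) * ((i/L : ℕ):ℤ) * ((k:ℤ) - 1 - ((i/L : ℕ):ℤ))
      + ((i%L : ℕ):ℤ) * ((k:ℤ) - 2 - 2*((i/L : ℕ):ℤ)) := by
    rcases hcase with h | ⟨hk2, h⟩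
    · rw [h]
      simp only [Nat.cast_zero, zero_mul, add_zero]
      apply mul_nonneg (mul_nonneg (by positivity) hT); linarith
    · have hTK2 : ((i/L : ℕ):ℤ) ≤ (k:ℤ) - 2 := by
        have h2 : ((i/L : ℕ):ℤ) ≤ ((k-2 : ℕ) : ℤ) := Nat.cast_le.2 h
        rwa [Nat.cast_sub hk2] at h2
      rcases le_or_gt 0 ((k:ℤ) - 2 - 2*((i/L : ℕ):ℤ)) with hpos | hneg
      · have h1 : (0:ℤ) ≤ (L:ℤ) * ((i/L : ℕ):ℤ) * ((k:ℤ) - 1 - ((i/L : ℕ):ℤ)) := by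
          apply mul_nonneg (mul_nonneg (by positivity) hT); linarith
        nlinarith
      · nlinarith [mul_nonneg (by linarith : (0:ℤ) ≤ (L:ℤ) - 1 - ((i%L : ℕ):ℤ))
            (by linarith : (0:ℤ) ≤ 2*((i/L : ℕ):ℤ) + 2 - (k:ℤ)),
          mul_nonneg (mul_nonneg (by positivity : (0:ℤ) ≤ (L:ℤ))
            (by linarith : (0:ℤ) ≤ ((i/L : ℕ):ℤ) + 1))
            (by linarith : (0:ℤ) ≤ (k:ℤ) - 2 - ((i/L : ℕ):ℤ))]
  unfold A
  linarith

lemma A_le (k L i : ℕ) (hk : 1 ≤ k) (hL : 1 ≤ L) (hi : i ≤ (k-1)*L) :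
    A k L i ≤ 3 * (k:ℤ)^2 * L := by
  have h0 : 0 < L := hL
  have hrL : i % L < L := Nat.mod_lt _ h0
  have htk : i / L ≤ k - 1 := by
    have h := Nat.div_le_div_right (c := L) hi
    rwa [Nat.mul_div_cancel _ h0] at h
  have hT : (0:ℤ) ≤ ((i/L : ℕ):ℤ) := by positivity
  have hR : (0:ℤ) ≤ ((i%L : ℕ):ℤ) := by positivity
  have hTK : ((i/L : ℕ):ℤ) ≤ (k:ℤ) - 1 := by
    have h2 : ((i/L : ℕ):ℤ) ≤ ((k-1 : ℕ) : ℤ) := by exact_mod_cast htk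
    omega
  have hRL : ((i%L : ℕ):ℤ) ≤ (L:ℤ) - 1 := by
    have h2 : ((i%L : ℕ):ℤ) < (L:ℤ) := by exact_mod_cast hrL
    omega
  have hk' : (1:ℤ) ≤ k := by exact_mod_cast hk
  have hL' : (1:ℤ) ≤ L := by exact_mod_cast hL
  unfold A
  nlinarith [mul_nonneg (by linarith : (0:ℤ) ≤ (L:ℤ)) (sq_nonneg ((k:ℤ)-1-2*((i/L : ℕ):ℤ))),
    mul_nonneg (mul_nonneg (by linarith : (0:ℤ) ≤ (L:ℤ)) hT) (by linarith : (0:ℤ) ≤ (k:ℤ)-1-((i/L : ℕ):ℤ)),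
    mul_nonneg hR (by linarith : (0:ℤ) ≤ 2*((i/L : ℕ):ℤ)+2+(k:ℤ)),
    mul_nonneg (by linarith : (0:ℤ) ≤ (L:ℤ) - 1 - ((i%L : ℕ):ℤ)) (by linarith : (0:ℤ) ≤ (k:ℤ)),
    mul_nonneg (by linarith : (0:ℤ) ≤ (L:ℤ)) (by nlinarith : (0:ℤ) ≤ (k:ℤ)^2 - 1),
    sq_nonneg ((k:ℤ)-1)]

end PLS

namespace PLS

lemma A_succ (k L i : ℕ) (hL : 1 ≤ L) :
    A k L (i+1) = A k L i + (k:ℤ) - 2*(((i/L : ℕ):ℤ) + 1) := by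
  have h0 : 0 < L := hL
  have hrL : i % L < L := Nat.mod_lt _ h0
  have hdm : L * (i / L) + i % L = i := Nat.div_add_mod i L
  rcases Nat.lt_or_ge (i % L + 1) L with hlt | hge
  · -- no block boundary
    have h1 : (i+1) / L = i / L ∧ (i+1) % L = i % L + 1 := by
      rw [Nat.div_mod_unique h0]
      constructor
      · omega
      · exact hlt
    rw [A, A, h1.1, h1.2]
    push_cast
    ring
  · -- boundary : i % L = L - 1
    have hb : i % L + 1 = L := by omega
    have h1 : (i+1) / L = i / L + 1 ∧ (i+1) % L = 0 := by
      rw [Nat.div_mod_unique h0]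
      constructor
      · have : L * (i / L + 1) = L * (i/L) + L := by ring
        omega
      · exact h0
    rw [A, A, h1.1, h1.2]
    have hcast : ((i % L : ℕ) : ℤ) = (L:ℤ) - 1 := by
      have h2 : ((i % L + 1 : ℕ) : ℤ) = ((L:ℕ):ℤ) := by exact_mod_cast hb
      push_cast at h2
      omega
    rw [hcast]
    push_cast
    ring

end PLS

namespace PLS

/-- discrepancy of layer `i` (for `0 ≤ i ≤ (k-1)*L + 1`). -/
def dv (k L i : ℕ) : ℤ :=
  (if i ≤ (k-1)*L then A k L i else 0) - (if 1 ≤ i then A k L (i-1) else 0)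

lemma dv_zero (k L : ℕ) : dv k L 0 = k := by simp [dv, A_zero]

lemma dv_eq (k L i : ℕ) (hL : 1 ≤ L) (h1 : 1 ≤ i) (h2 : i ≤ (k-1)*L) :
    dv k L i = (k:ℤ) - 2*((((i-1)/L : ℕ):ℤ) + 1) := by
  have hs := A_succ k L (i-1) hL
  have he : i - 1 + 1 = i := by omega
  rw [he] at hs
  rw [dv, if_pos h2, if_pos h1, hs]
  ring

lemma dv_last (k L : ℕ) (hk : 1 ≤ k) (hL : 1 ≤ L) :
    dv k L ((k-1)*L + 1) = -(k:ℤ) := by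
  rw [dv, if_neg (by omega), if_pos (by omega)]
  simp [A_M k L hk hL]

lemma dv_core (k L : ℕ) (hk : 1 ≤ k) (hL : 1 ≤ L) {j l : ℕ}
    (h1 : 1 ≤ l) (h2 : l ≤ L) (h3 : l ≤ j) (h4 : j ≤ (k-1)*L + 1) :
    dv k L (j - l) ≤ dv k L j + 2 := by
  have h0 : 0 < L := hL
  rcases Nat.lt_or_ge ((k-1)*L) j with hj | hj
  · -- j = (k-1)*L + 1
    have hje : j = (k-1)*L + 1 := by omega
    subst hje
    rw [dv_last k L hk hL]
    rcases Nat.eq_zero_or_pos ((k-1)*L + 1 - l) with hz | hp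
    · -- k = 1 forced
      have hkL : k = 1 ∨ L ≤ (k-1)*L := by
        rcases Nat.lt_or_ge k 2 with h | h
        · left; omega
        · right; exact Nat.le_mul_of_pos_left L (by omega)
      rcases hkL with hk1 | hbig
      · subst hk1
        simp only [Nat.sub_self, Nat.zero_mul] at hz ⊢
        rw [hz, dv_zero]
        norm_num
      · omega
    · -- interior end, k ≥ 2
      have hk2 : 2 ≤ k := by
        by_contra hc
        have : k = 1 := by omega
        subst this
        simp at hp h3
        omega
      have hle : (k-1)*L + 1 - l ≤ (k-1)*L := by omega
      rw [dv_eq k L _ hL hp hle]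
      have hq : k - 2 ≤ ((k-1)*L + 1 - l - 1) / L := by
        rw [Nat.le_div_iff_mul_le h0]
        have e1 : (k-2+1) * L = (k-1) * L := by
          congr 1; omega
        have : (k-1)*L = (k-2)*L + L := by rw [← e1]; ring
        omega
      have hq' : ((k:ℤ) - 2) ≤ ((((k-1)*L + 1 - l - 1)/L : ℕ):ℤ) := by
        have := Nat.cast_le (α := ℤ).2 hq
        rwa [Nat.cast_sub hk2] at this
      linarith
  · -- j ≤ (k-1)*L
    rcases Nat.eq_zero_or_pos (j - l) with hz | hp
    · -- j - l = 0, so j ≤ L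
      rw [hz, dv_zero]
      rcases Nat.eq_zero_or_pos j with hj0 | hj0
      · subst hj0; rw [dv_zero]; linarith
      · rw [dv_eq k L j hL hj0 hj]
        have : (j-1)/L = 0 := Nat.div_eq_of_lt (by omega)
        rw [this]
        norm_num
    · -- interior to interior
      rw [dv_eq k L _ hL hp (by omega), dv_eq k L j hL (by omega) hj]
      have hmono : (j-1)/L ≤ (j-l-1)/L + 1 := by
        have h5 : j - 1 ≤ (j - l - 1) + L := by omega
        calc (j-1)/L ≤ ((j-l-1) + L)/L := Nat.div_le_div_right h5
          _ = (j-l-1)/L + 1 := Nat.add_div_right _ h0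
      have : (((j-1)/L : ℕ):ℤ) ≤ (((j-l-1)/L : ℕ):ℤ) + 1 := by exact_mod_cast hmono
      linarith

lemma dv_le (k L i : ℕ) (hk : 1 ≤ k) (hL : 1 ≤ L) (h : i ≤ (k-1)*L + 1) :
    |dv k L i| ≤ (k:ℤ) := by
  have h0 : 0 < L := hL
  rcases Nat.eq_zero_or_pos i with h0' | hi1
  · subst h0'; rw [dv_zero]; rw [abs_of_nonneg (by positivity)]
  rcases Nat.lt_or_ge ((k-1)*L) i with hj | hj
  · have : i = (k-1)*L + 1 := by omega
    subst this
    rw [dv_last k L hk hL, abs_neg, abs_of_nonneg (by positivity)]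
  · rw [dv_eq k L i hL hi1 hj]
    have hk2 : 2 ≤ k := by
      by_contra hc
      have : k = 1 := by omega
      subst this
      simp at hj
      omega
    have hq : (i-1)/L ≤ k - 2 := by
      have : (i - 1)/L < k - 1 := by
        rw [Nat.div_lt_iff_lt_mul h0]
        have : (k-1)*L = L * (k-1) := Nat.mul_comm _ _
        omega
      omega
    have hq' : ((((i-1)/L : ℕ)):ℤ) ≤ (k:ℤ) - 2 := by
      have := Nat.cast_le (α := ℤ).2 hq
      rwa [Nat.cast_sub hk2] at this
    have hqn : (0:ℤ) ≤ ((((i-1)/L : ℕ)):ℤ) := by positivity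
    rw [abs_le]
    constructor <;> linarith

end PLS

namespace PLS

lemma count_val_lt (s a : ℕ) [NeZero s] (h : a ≤ s) :
    (univ.filter fun y : ZMod s => y.val < a).card = a := by
  have he : (univ.filter fun y : ZMod s => y.val < a)
      = (Finset.range a).image (Nat.cast : ℕ → ZMod s) := by
    ext y
    simp only [mem_filter, mem_univ, true_and, mem_image, mem_range]
    constructor
    · intro hy
      exact ⟨y.val, hy, ZMod.natCast_rightInverse y⟩
    · rintro ⟨c, hc, rfl⟩
      rwa [ZMod.val_cast_of_lt (lt_of_lt_of_le hc h)]
  rw [he, Finset.card_image_of_injOn, Finset.card_range]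
  intro c1 h1 c2 h2 hce
  simp only [Finset.coe_range, Set.mem_Iio] at h1 h2
  have := congrArg ZMod.val hce
  rwa [ZMod.val_cast_of_lt (lt_of_lt_of_le h1 h), ZMod.val_cast_of_lt (lt_of_lt_of_le h2 h)] at this

lemma count_sub (s a : ℕ) [NeZero s] (h : a ≤ s) (z : ZMod s) :
    (univ.filter fun x : ZMod s => (z - x).val < a).card = a := by
  have hb : (univ.filter fun x : ZMod s => (z - x).val < a).card
      = (univ.filter fun y : ZMod s => y.val < a).card := by
    apply Finset.card_bij' (fun x _ => z - x) (fun y _ => z - y)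
    · intro x hx
      simp only [mem_filter, mem_univ, true_and] at hx ⊢
      exact hx
    · intro y hy
      simp only [mem_filter, mem_univ, true_and] at hy ⊢
      rwa [sub_sub_cancel]
    · intro x _; rw [sub_sub_cancel]
    · intro y _; rw [sub_sub_cancel]
  rw [hb, count_val_lt s a h]

lemma count_sub' (s a : ℕ) [NeZero s] (h : a ≤ s) (z : ZMod s) :
    (univ.filter fun w : ZMod s => (w - z).val < a).card = a := by
  have hb : (univ.filter fun w : ZMod s => (w - z).val < a).card
      = (univ.filter fun y : ZMod s => y.val < a).card := by
    apply Finset.card_bij' (fun x _ => x - z) (fun y _ => y + z)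
    · intro x hx
      simp only [mem_filter, mem_univ, true_and] at hx ⊢
      exact hx
    · intro y hy
      simp only [mem_filter, mem_univ, true_and] at hy ⊢
      rwa [add_sub_cancel_right]
    · intro x _; rw [sub_add_cancel]
    · intro y _; rw [add_sub_cancel_right]
  rw [hb, count_val_lt s a h]

/-- Layered circulant digraph: layers `0..m`, each a copy of `ZMod s`; all edges go
from layer `i+1` to layer `i`, vertex `(i+1, x)` pointing to `(i, x + c)` for `c < a i`. -/
def LG (m s : ℕ) [NeZero s] (a : ℕ → ℕ) :
    Finset ((Fin (m+1) × ZMod s) × (Fin (m+1) × ZMod s)) :=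
  univ.filter (fun e => e.1.1.val = e.2.1.val + 1 ∧ (e.2.2 - e.1.2).val < a e.2.1.val)

lemma LG_layer {m s : ℕ} [NeZero s] {a : ℕ → ℕ}
    {u v : Fin (m+1) × ZMod s} (h : (u, v) ∈ LG m s a) :
    u.1.val = v.1.val + 1 := by
  simpa [LG] using (Finset.mem_filter.1 h).2.1

lemma inDeg_LG (m s : ℕ) [NeZero s] (a : ℕ → ℕ) (ha : ∀ i < m, a i ≤ s)
    (v : Fin (m+1) × ZMod s) :
    inDeg (LG m s a) v = if v.1.val < m then a v.1.val else 0 := by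
  rw [inDeg, LG, Finset.filter_filter]
  split_ifs with hv
  · have he : (univ.filter fun e : (Fin (m+1) × ZMod s) × (Fin (m+1) × ZMod s) =>
        (e.1.1.val = e.2.1.val + 1 ∧ (e.2.2 - e.1.2).val < a e.2.1.val) ∧ e.2 = v)
        = (({(⟨v.1.val + 1, by omega⟩ : Fin (m+1))} : Finset (Fin (m+1))) ×ˢ
            (univ.filter fun x : ZMod s => (v.2 - x).val < a v.1.val)) ×ˢ ({v} : Finset _) := by
      ext e
      simp only [mem_filter, mem_univ, true_and, Finset.mem_product, Finset.mem_singleton,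
        Fin.ext_iff]
      constructor
      · rintro ⟨⟨h1, h2⟩, h3⟩
        subst h3
        exact ⟨⟨by simpa using h1, h2⟩, rfl⟩
      · rintro ⟨⟨h1, h2⟩, h3⟩
        subst h3
        exact ⟨⟨by simpa using h1, h2⟩, rfl⟩
    rw [he, Finset.card_product, Finset.card_product, Finset.card_singleton,
      Finset.card_singleton, count_sub s _ (ha _ hv) v.2]
    ring
  · convert Finset.card_empty
    rw [Finset.eq_empty_iff_forall_notMem]
    intro e he
    simp only [mem_filter, mem_univ, true_and] at he
    obtain ⟨⟨h1, _⟩, h3⟩ := he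
    subst h3
    have := e.1.1.isLt
    omega

lemma outDeg_LG (m s : ℕ) [NeZero s] (a : ℕ → ℕ) (ha : ∀ i < m, a i ≤ s)
    (v : Fin (m+1) × ZMod s) :
    outDeg (LG m s a) v = if 1 ≤ v.1.val then a (v.1.val - 1) else 0 := by
  rw [outDeg, LG, Finset.filter_filter]
  split_ifs with hv
  · have hlt : v.1.val - 1 < m := by have := v.1.isLt; omega
    have he : (univ.filter fun e : (Fin (m+1) × ZMod s) × (Fin (m+1) × ZMod s) =>
        (e.1.1.val = e.2.1.val + 1 ∧ (e.2.2 - e.1.2).val < a e.2.1.val) ∧ e.1 = v)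
        = ({v} : Finset _) ×ˢ
          (({(⟨v.1.val - 1, by omega⟩ : Fin (m+1))} : Finset (Fin (m+1))) ×ˢ
            (univ.filter fun w : ZMod s => (w - v.2).val < a (v.1.val - 1))) := by
      ext e
      simp only [mem_filter, mem_univ, true_and, Finset.mem_product, Finset.mem_singleton,
        Fin.ext_iff]
      constructor
      · rintro ⟨⟨h1, h2⟩, h3⟩
        subst h3
        have h4 : e.2.1.val = e.1.1.val - 1 := by omega
        refine ⟨rfl, by simpa using h4, ?_⟩
        rwa [h4] at h2
      · rintro ⟨h3, h1, h2⟩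
        subst h3
        have h4 : e.2.1.val = e.1.1.val - 1 := by simpa using h1
        exact ⟨⟨by omega, by rwa [h4]⟩, rfl⟩
    rw [he, Finset.card_product, Finset.card_product, Finset.card_singleton,
      Finset.card_singleton, count_sub' s _ (ha _ hlt) v.2]
    ring
  · convert Finset.card_empty
    rw [Finset.eq_empty_iff_forall_notMem]
    intro e he
    simp only [mem_filter, mem_univ, true_and] at he
    obtain ⟨⟨h1, _⟩, h3⟩ := he
    subst h3
    omega

end PLS

namespace PLS

variable {V W : Type*} [DecidableEq V] [DecidableEq W]

lemma mem_image_equiv (e : V ≃ W) (D : Finset (V × V)) {x y : W} :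
    (x, y) ∈ D.image (Prod.map e e) ↔ (e.symm x, e.symm y) ∈ D := by
  constructor
  · intro h
    obtain ⟨d, hd, hxy⟩ := Finset.mem_image.1 h
    have h1 : e d.1 = x := congrArg Prod.fst hxy
    have h2 : e d.2 = y := congrArg Prod.snd hxy
    have : d = (e.symm x, e.symm y) := by
      ext
      · simp [← h1]
      · simp [← h2]
    rwa [this] at hd
  · intro h
    exact Finset.mem_image.2 ⟨_, h, by simp [Prod.map]⟩

lemma disc_image (e : V ≃ W) (D : Finset (V × V)) (v : V) :
    disc (D.image (Prod.map e e)) (e v) = disc D v := by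
  have hinj : Function.Injective (Prod.map (e : V → W) (e : V → W)) :=
    Function.Injective.prodMap e.injective e.injective
  have h1 : (D.image (Prod.map e e)).filter (fun x => x.2 = e v)
      = (D.filter (fun x => x.2 = v)).image (Prod.map e e) := by
    ext x
    simp only [mem_filter, Finset.mem_image]
    constructor
    · rintro ⟨⟨d, hd, rfl⟩, h2⟩
      have : d.2 = v := e.injective h2
      exact ⟨d, ⟨hd, this⟩, rfl⟩
    · rintro ⟨d, ⟨hd, h2⟩, rfl⟩
      exact ⟨⟨d, hd, rfl⟩, by simp [h2]⟩
  have h2 : (D.image (Prod.map e e)).filter (fun x => x.1 = e v)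
      = (D.filter (fun x => x.1 = v)).image (Prod.map e e) := by
    ext x
    simp only [mem_filter, Finset.mem_image]
    constructor
    · rintro ⟨⟨d, hd, rfl⟩, h2⟩
      have : d.1 = v := e.injective h2
      exact ⟨d, ⟨hd, this⟩, rfl⟩
    · rintro ⟨d, ⟨hd, h2⟩, rfl⟩
      exact ⟨⟨d, hd, rfl⟩, by simp [h2]⟩
  rw [disc, disc, inDeg, outDeg, inDeg, outDeg, h1, h2,
    Finset.card_image_of_injective _ hinj, Finset.card_image_of_injective _ hinj]

end PLS


open PLS in
/-- **Tightness of the path-local-search discrepancy bound.** For every `k` and odd `L`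
there is a directed graph that is a local optimum of path local search with parameter
`L`, has maximum discrepancy exactly `k`, and has `O(k³L²)` vertices. -/
theorem stmt11 :
    ∃ C : ℕ, 0 < C ∧
      ∀ k L : ℕ, Odd L →
        ∃ (N : ℕ) (D : Finset (Fin N × Fin N)),
          pathLocalOpt D L ∧
          (∃ v : Fin N, disc D v = (k : ℤ)) ∧
          (∀ v : Fin N, |disc D v| ≤ (k : ℤ)) ∧
          N ≤ C * (k ^ 3 * L ^ 2 + 1) := by
  refine ⟨9, by norm_num, ?_⟩
  intro k L hLodd
  have hL : 1 ≤ L := hLodd.pos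
  rcases Nat.eq_zero_or_pos k with hk0 | hk
  · -- k = 0 : a single vertex, no edges
    subst hk0
    refine ⟨1, ∅, ?_, ⟨0, by simp [disc, inDeg, outDeg]⟩,
      fun v => by simp [disc, inDeg, outDeg], by norm_num⟩
    intro l h1 _ p hp
    exact absurd (hp 0 h1) (by simp)
  · -- main construction
    set M : ℕ := (k-1)*L with hM
    set s : ℕ := 3*k^2*L with hs
    have hspos : 0 < s := by
      have h1 : 0 < k^2 := pow_pos hk 2
      exact Nat.mul_pos (Nat.mul_pos (by norm_num) h1) hL
    haveI : NeZero s := ⟨by omega⟩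
    set a : ℕ → ℕ := fun i => (A k L i).toNat with haa
    have hA0 : (0:ℤ) ≤ (k:ℤ) := by positivity
    have haA : ∀ i, i ≤ M → ((a i : ℕ) : ℤ) = A k L i := by
      intro i hi
      exact Int.toNat_of_nonneg (le_trans hA0 (A_ge k L i hk hL hi))
    have ha : ∀ i, i < M + 1 → a i ≤ s := by
      intro i hi
      have h1 : A k L i ≤ 3 * (k:ℤ)^2 * L := A_le k L i hk hL (by omega)
      have h2 : ((s:ℕ):ℤ) = 3 * (k:ℤ)^2 * L := by push_cast [hs]; ring
      rw [← Int.toNat_of_nonneg (le_trans hA0 (A_ge k L i hk hL (by omega)))] at h1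
      exact_mod_cast h1.trans_eq h2.symm
    set N : ℕ := (M+2) * s with hN
    have hcard : Fintype.card (Fin (M+2) × ZMod s) = N := by
      rw [Fintype.card_prod, Fintype.card_fin, ZMod.card]
    set eqv : (Fin (M+2) × ZMod s) ≃ Fin N := Fintype.equivFinOfCardEq hcard with heqv
    set D0 := LG (M+1) s a with hD0
    set D : Finset (Fin N × Fin N) := D0.image (Prod.map eqv eqv) with hD
    -- discrepancy of any vertex of the layered graph
    have hdisc : ∀ v : Fin (M+2) × ZMod s, disc D0 v = dv k L v.1.val := by
      intro v
      have hv2 : v.1.val < M + 2 := v.1.isLt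
      rw [disc, hD0, inDeg_LG (M+1) s a ha, outDeg_LG (M+1) s a ha, dv]
      rw [Nat.cast_ite, Nat.cast_ite]
      congr 1
      · by_cases h : v.1.val < M + 1
        · rw [if_pos h, if_pos (show v.1.val ≤ M by omega), haA _ (by omega)]
        · rw [if_neg h, if_neg (show ¬ v.1.val ≤ M by omega)]
          simp
      · by_cases h : 1 ≤ v.1.val
        · rw [if_pos h, if_pos h, haA _ (by omega)]
        · rw [if_neg h, if_neg h]
          simp
    have hdiscD : ∀ v : Fin (M+2) × ZMod s, disc D (eqv v) = dv k L v.1.val := by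
      intro v
      rw [hD, disc_image eqv D0 v, hdisc v]
    refine ⟨N, D, ?_, ?_, ?_, ?_⟩
    · -- local optimality
      intro l h1 h2 p hp
      set q : ℕ → Fin (M+2) × ZMod s := fun j => eqv.symm (p j) with hq
      have hedge : ∀ j, j < l → (q j, q (j+1)) ∈ D0 := by
        intro j hj
        have := hp j hj
        rw [hD] at this
        exact (mem_image_equiv eqv D0).1 this
      have hlay : ∀ j, j ≤ l → (q j).1.val + j = (q 0).1.val := by
        intro j
        induction j with
        | zero => intro _; rfl
        | succ n ih =>
          intro hn
          have h3 := LG_layer (hedge n (by omega))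
          have h4 := ih (by omega)
          omega
      have hJl : (q l).1.val + l = (q 0).1.val := hlay l le_rfl
      have hpl : p l = eqv (q l) := by rw [hq]; simp
      have hp0 : p 0 = eqv (q 0) := by rw [hq]; simp
      rw [hpl, hp0, hdiscD, hdiscD]
      have hql : (q l).1.val = (q 0).1.val - l := by omega
      rw [hql]
      exact dv_core k L hk hL h1 h2 (by omega) (by have := (q 0).1.isLt; omega)
    · -- a vertex of discrepancy exactly k
      refine ⟨eqv (⟨0, by omega⟩, 0), ?_⟩
      rw [hdiscD]
      simpa using dv_zero k L
    · -- all discrepancies at most k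
      intro w
      have hw : w = eqv (eqv.symm w) := by simp
      rw [hw, hdiscD]
      exact dv_le k L _ hk hL (by have := (eqv.symm w).1.isLt; omega)
    · -- size bound
      have hstep : (M+2) ≤ k*L + 1 := by
        have h1 : (k-1) * L = k * L - 1 * L := Nat.sub_mul k 1 L
        have h2 : L ≤ k * L := Nat.le_mul_of_pos_left L hk
        omega
      calc N ≤ (k*L+1) * s := Nat.mul_le_mul_right s hstep
        _ = 3*(k^3*L^2) + 3*(k^2*L) := by rw [hs]; ring
        _ ≤ 3*(k^3*L^2) + 3*(k^3*L^2) := by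
            have h3 : k^2*L ≤ k^3*L^2 :=
              Nat.mul_le_mul (Nat.pow_le_pow_right hk (by norm_num))
                (Nat.le_self_pow (by norm_num) L)
            omega
        _ ≤ 9 * (k^3*L^2 + 1) := by omega
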